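/- For every n ≥ 1, the sum of ds(P) over all grand Dyck paths P ∈ 𝒢_n equals 2^{2n−1}, and the sum of sv(P) over all P ∈ 𝒢_n equals 4^n − binom(2n,n). (Equivalently, since |𝒢_n| = binom(2n,n), the expected degree of symmetry of a uniformly random path in 𝒢_n is 2^{2n−1}/binom(2n,n) and its expected number of symmetric vertices is 4^n/binom(2n,n) − 1.) -/

import Mathlib

/-- The height of the lattice path encoded by `w` (with `true = U`, `false = D`) after `j` steps. -/
def ht (w : List Bool) (j : ℕ) : ℤ :=
  ((w.take j).count true : ℤ) - ((w.take j).count false : ℤ)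


open Finset

/-- all Bool lists of length `L` -/
def BW : ℕ → Finset (List Bool)
  | 0 => {[]}
  | L + 1 => ((BW L).image (List.cons true)) ∪ ((BW L).image (List.cons false))

lemma mem_BW {w : List Bool} {L : ℕ} : w ∈ BW L ↔ w.length = L := by
  induction L generalizing w with
  | zero => simp [BW, List.length_eq_zero_iff]
  | succ L ih =>
    cases w with
    | nil => simp [BW]
    | cons b t =>
      cases b <;> simp [BW, ih]

lemma count_true_add_count_false (l : List Bool) :
    l.count true + l.count false = l.length := by
  induction l with
  | nil => simp
  | cons b t ih => cases b <;> simp [List.count_cons] <;> omega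

def F (L k : ℕ) : Finset (List Bool) := (BW L).filter fun w => w.count true = k

lemma F_succ_zero (L : ℕ) : F (L+1) 0 = (F L 0).image (List.cons false) := by
  ext w
  simp only [F, BW, mem_filter, mem_union, mem_image]
  constructor
  · rintro ⟨⟨t, ht, rfl⟩ | ⟨t, ht, rfl⟩, hc⟩
    · simp [List.count_cons] at hc
    · exact ⟨t, ⟨ht, by simpa [List.count_cons] using hc⟩, rfl⟩
  · rintro ⟨t, ⟨ht, hc⟩, rfl⟩
    exact ⟨Or.inr ⟨t, ht, rfl⟩, by simpa [List.count_cons]⟩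

lemma F_succ_succ (L k : ℕ) :
    F (L+1) (k+1) = (F L k).image (List.cons true) ∪ (F L (k+1)).image (List.cons false) := by
  ext w
  simp only [F, BW, mem_filter, mem_union, mem_image]
  constructor
  · rintro ⟨⟨t, ht, rfl⟩ | ⟨t, ht, rfl⟩, hc⟩
    · exact Or.inl ⟨t, ⟨ht, by simpa [List.count_cons] using hc⟩, rfl⟩
    · exact Or.inr ⟨t, ⟨ht, by simpa [List.count_cons] using hc⟩, rfl⟩
  · rintro (⟨t, ⟨ht, hc⟩, rfl⟩ | ⟨t, ⟨ht, hc⟩, rfl⟩)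
    · exact ⟨Or.inl ⟨t, ht, rfl⟩, by simp [List.count_cons, hc]⟩
    · exact ⟨Or.inr ⟨t, ht, rfl⟩, by simp [List.count_cons, hc]⟩

lemma card_F (L k : ℕ) : (F L k).card = L.choose k := by
  induction L generalizing k with
  | zero =>
    cases k with
    | zero => simp [F, BW, Finset.filter_singleton]
    | succ k => simp [F, BW, Finset.filter_singleton]
  | succ L ih =>
    cases k with
    | zero =>
      rw [F_succ_zero, Finset.card_image_of_injective _ (List.cons_injective), ih]
      simp
    | succ k =>
      have hdisj : Disjoint ((F L k).image (List.cons true))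
          ((F L (k+1)).image (List.cons false)) := by
        simp only [Finset.disjoint_left, Finset.mem_image]
        rintro a ⟨x, _, rfl⟩ ⟨y, _, h⟩
        simp at h
      rw [F_succ_succ, Finset.card_union_of_disjoint hdisj,
        Finset.card_image_of_injective _ (List.cons_injective),
        Finset.card_image_of_injective _ (List.cons_injective), ih, ih,
        Nat.choose_succ_succ]
/-- the segment of `w` from position `a` to position `b` -/
def seg (w : List Bool) (a b : ℕ) : List Bool := (w.take b).drop a

lemma length_seg (w : List Bool) (a b : ℕ) (hab : a ≤ b) (hb : b ≤ w.length) :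
    (seg w a b).length = b - a := by
  simp [seg, List.length_drop, List.length_take]
  omega

lemma decomp (w : List Bool) (a b : ℕ) (hab : a ≤ b) :
    w = w.take a ++ seg w a b ++ w.drop b := by
  have h1 : w.take b = w.take a ++ seg w a b := by
    conv_lhs => rw [← List.take_append_drop a (w.take b)]
    rw [List.take_take, min_eq_left hab]
    rfl
  conv_lhs => rw [← List.take_append_drop b w, h1]

lemma seg_append (A M B : List Bool) :
    seg (A ++ M ++ B) A.length (A.length + M.length) = M := by
  rw [seg, List.append_assoc, List.take_length_add_append, List.drop_left]
  rw [List.take_left]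

lemma take_append_left (A R : List Bool) : (A ++ R).take A.length = A := List.take_left

lemma drop_append2 (A M B : List Bool) : (A ++ M ++ B).drop (A.length + M.length) = B := by
  rw [List.append_assoc, List.drop_length_add_append, List.drop_left]

-- count split
lemma count_decomp (w : List Bool) (a b : ℕ) (hab : a ≤ b) :
    w.count true = (w.take a).count true + (seg w a b).count true + (w.drop b).count true := by
  conv_lhs => rw [decomp w a b hab]
  simp [List.count_append]; omega

lemma ht_eq (w : List Bool) (j : ℕ) (hj : j ≤ w.length) :
    ht w j = 2 * ((w.take j).count true : ℤ) - j := by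
  have h := count_true_add_count_false (w.take j)
  rw [List.length_take, min_eq_left hj] at h
  rw [ht]
  have : ((w.take j).count false : ℤ) = j - (w.take j).count true := by
    omega
  rw [this]; ring

lemma count_take_add_seg (w : List Bool) (a b : ℕ) (hab : a ≤ b) (hb : b ≤ w.length) :
    (w.take b).count true = (w.take a).count true + (seg w a b).count true := by
  have h1 : w.take b = w.take a ++ seg w a b := by
    conv_lhs => rw [← List.take_append_drop a (w.take b)]
    rw [List.take_take, min_eq_left hab]
    rfl
  rw [h1, List.count_append]

/-- key translation: the height equality is a count condition on the middle segment -/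
lemma ht_eq_iff (n i : ℕ) (w : List Bool) (hw : w.length = 2 * n) (hi : i ≤ n) :
    ht w i = ht w (2 * n - i) ↔ (seg w i (2 * n - i)).count true = n - i := by
  have h1 : i ≤ 2 * n - i := by omega
  have h2 : 2 * n - i ≤ w.length := by omega
  have hi2 : i ≤ w.length := by omega
  rw [ht_eq w i hi2, ht_eq w (2*n-i) h2,
    count_take_add_seg w i (2*n-i) h1 h2]
  have hlen : (seg w i (2*n-i)).length = 2*n - 2*i := by
    rw [length_seg w i (2*n-i) h1 h2]; omega
  have hc : (seg w i (2*n-i)).count true ≤ 2*n - 2*i := by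
    calc (seg w i (2*n-i)).count true ≤ (seg w i (2*n-i)).length := List.count_le_length
    _ = 2*n-2*i := hlen
  constructor
  · intro h
    push_cast at h ⊢
    omega
  · intro h
    push_cast [h]
    push_cast at h ⊢
    omega

lemma card_seg1 (n i : ℕ) (hi : i ≤ n) :
    ((F (2*n) n).filter (fun w => (seg w i (2*n-i)).count true = n - i)).card
      = (2*i).choose i * (2*(n-i)).choose (n-i) := by
  rw [← card_F (2*i) i, ← card_F (2*(n-i)) (n-i), ← Finset.card_product]
  apply Finset.card_nbij' (i := fun w => (w.take i ++ w.drop (2*n-i), seg w i (2*n-i)))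
    (j := fun p => p.1.take i ++ p.2 ++ p.1.drop i)
  · -- forward membership
    intro w hw
    simp only [Finset.mem_coe, Finset.mem_filter, F, mem_BW] at hw
    obtain ⟨⟨hlen, hcnt⟩, hseg⟩ := hw
    have h1 : i ≤ 2*n - i := by omega
    have h2 : 2*n - i ≤ w.length := by omega
    have hcd := count_decomp w i (2*n-i) h1
    simp only [Finset.mem_coe, Finset.mem_product, Finset.mem_filter, F, mem_BW]
    refine ⟨⟨?_, ?_⟩, ?_, hseg⟩
    · simp [List.length_take, List.length_drop, hlen]; omega
    · rw [List.count_append]; omega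
    · rw [length_seg w i (2*n-i) h1 h2]; omega
  · -- backward membership
    rintro ⟨p, M⟩ hp
    simp only [Finset.mem_coe, Finset.mem_product, Finset.mem_filter, F, mem_BW] at hp
    obtain ⟨⟨hpl, hpc⟩, hMl, hMc⟩ := hp
    have hA : (p.take i).length = i := by simp [List.length_take]; omega
    have hB : (p.drop i).length = i := by simp [List.length_drop]; omega
    have hsg : seg (p.take i ++ M ++ p.drop i) i (2*n-i) = M := by
      have := seg_append (p.take i) M (p.drop i)
      rw [hA, hMl] at this
      have he : i + 2*(n-i) = 2*n - i := by omega
      rwa [he] at this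
    simp only [Finset.mem_coe, Finset.mem_filter, F, mem_BW]
    refine ⟨⟨?_, ?_⟩, ?_⟩
    · simp [List.length_append, hA, hB, hMl]; omega
    · have := List.take_append_drop i p
      have hcc : (p.take i).count true + (p.drop i).count true = i := by
        rw [← List.count_append, this, hpc]
      simp [List.count_append]; omega
    · rw [hsg, hMc]
  · -- left inverse
    intro w hw
    simp only [Finset.mem_coe, Finset.mem_filter, F, mem_BW] at hw
    obtain ⟨⟨hlen, _⟩, _⟩ := hw
    have h1 : i ≤ 2*n - i := by omega
    have hA : (w.take i).length = i := by simp [List.length_take]; omega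
    have ht : (w.take i ++ w.drop (2*n-i)).take i = w.take i := by
      have := List.take_left (l₁ := w.take i) (l₂ := w.drop (2*n-i)); rwa [hA] at this
    have hd : (w.take i ++ w.drop (2*n-i)).drop i = w.drop (2*n-i) := by
      have := List.drop_left (l₁ := w.take i) (l₂ := w.drop (2*n-i)); rwa [hA] at this
    simp only [ht, hd]
    exact (decomp w i (2*n-i) h1).symm
  · -- right inverse
    rintro ⟨p, M⟩ hp
    simp only [Finset.mem_coe, Finset.mem_product, Finset.mem_filter, F, mem_BW] at hp
    obtain ⟨⟨hpl, hpc⟩, hMl, hMc⟩ := hp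
    have hA : (p.take i).length = i := by simp [List.length_take]; omega
    have hsg : seg (p.take i ++ M ++ p.drop i) i (2*n-i) = M := by
      have := seg_append (p.take i) M (p.drop i)
      rw [hA, hMl] at this
      have he : i + 2*(n-i) = 2*n - i := by omega
      rwa [he] at this
    have ht : (p.take i ++ M ++ p.drop i).take i = p.take i := by
      have := List.take_left (l₁ := p.take i) (l₂ := M ++ p.drop i)
      rw [hA] at this
      rwa [List.append_assoc]
    have hd : (p.take i ++ M ++ p.drop i).drop (2*n-i) = p.drop i := by
      have := drop_append2 (p.take i) M (p.drop i)
      rw [hA, hMl] at this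
      have he : i + 2*(n-i) = 2*n - i := by omega
      rwa [he] at this
    simp only [ht, hd, hsg, List.take_append_drop]

lemma seg_cons_concat (w : List Bool) (a b : ℕ) (h1 : a + 2 ≤ b) (h2 : b ≤ w.length) :
    seg w a b = w.getD a false :: (seg w (a+1) (b-1) ++ [w.getD (b-1) false]) := by
  have ha : a < w.length := by omega
  have hb1 : b - 1 < w.length := by omega
  have hta : a < (w.take b).length := by simp [List.length_take]; omega
  have step1 : seg w a b = w.getD a false :: (w.take b).drop (a+1) := by
    rw [seg, List.drop_eq_getElem_cons hta, List.getElem_take, List.getD_eq_getElem _ _ ha]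
  have htake : w.take b = w.take (b-1) ++ [w.getD (b-1) false] := by
    have hb : b = (b-1) + 1 := by omega
    conv_lhs => rw [hb]
    rw [List.take_succ, List.getElem?_eq_getElem hb1, List.getD_eq_getElem _ _ hb1]
    simp
  have step2 : (w.take b).drop (a+1) = seg w (a+1) (b-1) ++ [w.getD (b-1) false] := by
    rw [htake, List.drop_append_of_le_length (by simp [List.length_take]; omega)]
    rfl
  rw [step1, step2]

lemma getD_append_length (A : List Bool) (b : Bool) (R : List Bool) :
    (A ++ b :: R).getD A.length false = b := by
  induction A with
  | nil => rfl
  | cons a t ih => simpa using ih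

lemma card_seg2 (n j : ℕ) (hj : j < n) :
    ((F (2*n) n).filter (fun w => (seg w j (2*n-j)).count true = n - j ∧
        (seg w (j+1) (2*n-(j+1))).count true = n - (j+1))).card
      = 2 * ((2*j).choose j * (2*(n-j-1)).choose (n-j-1)) := by
  have hcard : ((((F (2*j) j) ×ˢ (Finset.univ : Finset Bool)) ×ˢ F (2*(n-j-1)) (n-j-1)).card)
      = 2 * ((2*j).choose j * (2*(n-j-1)).choose (n-j-1)) := by
    simp [Finset.card_product, card_F, Finset.card_univ]; ring
  rw [← hcard]
  apply Finset.card_nbij'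
    (i := fun w => ((w.take j ++ w.drop (2*n-j), w.getD j false), seg w (j+1) (2*n-(j+1))))
    (j := fun q => q.1.1.take j ++ q.1.2 :: (q.2 ++ (!q.1.2) :: q.1.1.drop j))
  · -- forward membership
    intro w hw
    simp only [Finset.mem_coe, Finset.mem_filter, F, mem_BW] at hw
    obtain ⟨⟨hlen, hcnt⟩, hseg1, hseg2⟩ := hw
    have h1 : j ≤ 2*n - j := by omega
    have h2 : 2*n - j ≤ w.length := by omega
    have hcd := count_decomp w j (2*n-j) h1
    simp only [Finset.mem_coe, Finset.mem_product, Finset.mem_filter, F, mem_BW, Finset.mem_univ, and_true]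
    refine ⟨⟨?_, ?_⟩, ?_, hseg2⟩
    · simp [List.length_take, List.length_drop, hlen]; omega
    · rw [List.count_append]; omega
    · rw [length_seg w (j+1) (2*n-(j+1)) (by omega) (by omega)]; omega
  · -- backward membership
    rintro ⟨⟨p, b⟩, M⟩ hq
    simp only [Finset.mem_coe, Finset.mem_product, Finset.mem_filter, F, mem_BW, Finset.mem_univ, and_true] at hq
    obtain ⟨⟨hpl, hpc⟩, hMl, hMc⟩ := hq
    have hA : (p.take j).length = j := by simp [List.length_take]; omega
    have hB : (p.drop j).length = j := by simp [List.length_drop]; omega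
    have hcc : (p.take j).count true + (p.drop j).count true = j := by
      rw [← List.count_append, List.take_append_drop, hpc]
    set w' := p.take j ++ b :: (M ++ (!b) :: p.drop j) with hw'
    have hre : w' = p.take j ++ (b :: (M ++ [!b])) ++ p.drop j := by
      simp [hw', List.append_assoc]
    have hMidl : (b :: (M ++ [!b])).length = 2*n - 2*j := by
      simp [List.length_append, hMl]; omega
    have hsg1 : seg w' j (2*n-j) = b :: (M ++ [!b]) := by
      have := seg_append (p.take j) (b :: (M ++ [!b])) (p.drop j)
      rw [hA, hMidl] at this
      rw [hre]
      have he : j + (2*n - 2*j) = 2*n - j := by omega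
      rwa [he] at this
    have hre2 : w' = (p.take j ++ [b]) ++ M ++ ((!b) :: p.drop j) := by
      simp [hw', List.append_assoc]
    have hsg2 : seg w' (j+1) (2*n-(j+1)) = M := by
      have := seg_append (p.take j ++ [b]) M ((!b) :: p.drop j)
      rw [List.length_append, hA, hMl] at this
      rw [hre2]
      have he : j + [b].length + 2*(n-j-1) = 2*n - (j+1) := by simp; omega
      rwa [he] at this
    simp only [Finset.mem_coe, Finset.mem_filter, F, mem_BW, ← hw']
    refine ⟨⟨?_, ?_⟩, ?_, ?_⟩
    · simp [hw', List.length_append, hA, hB, hMl]; omega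
    · rw [hw']; cases b <;> simp [List.count_append, List.count_cons] <;> omega
    · rw [hsg1]; cases b <;> simp [List.count_append, List.count_cons] <;> omega
    · rw [hsg2, hMc]; omega
  · -- left inverse
    intro w hw
    simp only [Finset.mem_coe, Finset.mem_filter, F, mem_BW] at hw
    obtain ⟨⟨hlen, hcnt⟩, hseg1, hseg2⟩ := hw
    have h1 : j ≤ 2*n - j := by omega
    have hsc := seg_cons_concat w j (2*n-j) (by omega) (by omega)
    have he1 : 2*n - j - 1 = 2*n - (j+1) := by omega
    rw [he1] at hsc
    obtain ⟨c, hc⟩ : ∃ c, w.getD j false = c := ⟨_, rfl⟩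
    obtain ⟨d, hdd⟩ : ∃ d, w.getD (2*n-(j+1)) false = d := ⟨_, rfl⟩
    rw [hc, hdd] at hsc
    have hcount := hseg1
    rw [hsc] at hcount
    -- the last element is the negation of the first
    have hd : d = !c := by
      cases c <;> cases d
      · exfalso; simp [List.count_cons, List.count_append] at hcount; omega
      · rfl
      · rfl
      · exfalso; simp [List.count_cons, List.count_append] at hcount; omega
    have hA : (w.take j).length = j := by simp [List.length_take]; omega
    have ht : (w.take j ++ w.drop (2*n-j)).take j = w.take j := by
      have := List.take_left (l₁ := w.take j) (l₂ := w.drop (2*n-j)); rwa [hA] at this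
    have hdr : (w.take j ++ w.drop (2*n-j)).drop j = w.drop (2*n-j) := by
      have := List.drop_left (l₁ := w.take j) (l₂ := w.drop (2*n-j)); rwa [hA] at this
    simp only [ht, hdr, hc]
    conv_rhs => rw [decomp w j (2*n-j) h1]
    rw [hsc, hd]
    simp [List.cons_append, List.append_assoc]
  · -- right inverse
    rintro ⟨⟨p, b⟩, M⟩ hq
    simp only [Finset.mem_coe, Finset.mem_product, Finset.mem_filter, F, mem_BW, Finset.mem_univ, and_true] at hq
    obtain ⟨⟨hpl, hpc⟩, hMl, hMc⟩ := hq
    have hA : (p.take j).length = j := by simp [List.length_take]; omega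
    set w' := p.take j ++ b :: (M ++ (!b) :: p.drop j) with hw'
    have hre : w' = p.take j ++ (b :: (M ++ [!b])) ++ p.drop j := by
      simp [hw', List.append_assoc]
    have hMidl : (b :: (M ++ [!b])).length = 2*n - 2*j := by
      simp [List.length_append, hMl]; omega
    have hre2 : w' = (p.take j ++ [b]) ++ M ++ ((!b) :: p.drop j) := by
      simp [hw', List.append_assoc]
    have hsg2 : seg w' (j+1) (2*n-(j+1)) = M := by
      have := seg_append (p.take j ++ [b]) M ((!b) :: p.drop j)
      rw [List.length_append, hA, hMl] at this
      rw [hre2]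
      have he : j + [b].length + 2*(n-j-1) = 2*n - (j+1) := by simp; omega
      rwa [he] at this
    have ht : w'.take j = p.take j := by
      have := List.take_left (l₁ := p.take j) (l₂ := b :: (M ++ (!b) :: p.drop j))
      rwa [hA] at this
    have hdr : w'.drop (2*n-j) = p.drop j := by
      have := drop_append2 (p.take j) (b :: (M ++ [!b])) (p.drop j)
      rw [hA, hMidl, ← hre] at this
      have he : j + (2*n - 2*j) = 2*n - j := by omega
      rwa [he] at this
    have hgd : w'.getD j false = b := by
      have := getD_append_length (p.take j) b (M ++ (!b) :: p.drop j)
      rwa [hA] at this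
    simp only [← hw', ht, hdr, hgd, hsg2, List.take_append_drop]
open Nat in
lemma cb_conv (m : ℕ) :
    ∑ k ∈ range (m+1), centralBinom k * centralBinom (m - k) = 4 ^ m := by
  induction m with
  | zero => simp
  | succ m ih =>
    set S := ∑ k ∈ range (m+1), centralBinom k * centralBinom (m - k) with hS
    -- T := weighted sum
    set T := ∑ k ∈ range (m+1), (2*k+1) * (centralBinom k * centralBinom (m - k)) with hT
    have hTT : 2 * T = (2*m+2) * S := by
      have hrefl : ∑ k ∈ range (m+1), (2*(m-k)+1) * (centralBinom k * centralBinom (m - k)) = T := by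
        rw [hT]
        rw [← Finset.sum_range_reflect (fun k => (2*(m-k)+1) * (centralBinom k * centralBinom (m - k))) (m+1)]
        apply Finset.sum_congr rfl
        intro j hj
        simp only [Finset.mem_range] at hj
        have h1 : m + 1 - 1 - j = m - j := by omega
        have h2 : m - (m - j) = j := by omega
        rw [h1, h2, mul_comm (centralBinom (m-j)) (centralBinom j)]
      calc 2 * T = T + T := by ring
        _ = (∑ k ∈ range (m+1), (2*k+1) * (centralBinom k * centralBinom (m - k)))
            + ∑ k ∈ range (m+1), (2*(m-k)+1) * (centralBinom k * centralBinom (m - k)) := by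
              rw [hrefl, hT]
        _ = ∑ k ∈ range (m+1), ((2*k+1) + (2*(m-k)+1)) * (centralBinom k * centralBinom (m - k)) := by
              rw [← Finset.sum_add_distrib]
              exact Finset.sum_congr rfl fun k hk => by ring
        _ = (2*m+2) * S := by
              rw [hS, Finset.mul_sum]
              apply Finset.sum_congr rfl
              intro k hk
              simp only [Finset.mem_range] at hk
              have : 2*k+1 + (2*(m-k)+1) = 2*m+2 := by omega
              rw [this]
    -- first weighted sum
    have hA : ∑ k ∈ range (m+2), k * (centralBinom k * centralBinom (m + 1 - k)) = 2 * T := by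
      rw [Finset.sum_range_succ' (fun k => k * (centralBinom k * centralBinom (m + 1 - k))) (m+1)]
      simp only [Nat.zero_mul, add_zero, zero_mul]
      rw [hT, Finset.mul_sum]
      apply Finset.sum_congr rfl
      intro j hj
      simp only [Finset.mem_range] at hj
      have h1 : m + 1 - (j + 1) = m - j := by omega
      have h2 : (j+1) * centralBinom (j+1) = 2 * (2*j+1) * centralBinom j :=
        Nat.succ_mul_centralBinom_succ j
      rw [h1]
      calc (j+1) * (centralBinom (j+1) * centralBinom (m-j))
          = ((j+1) * centralBinom (j+1)) * centralBinom (m-j) := by ring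
        _ = (2 * (2*j+1) * centralBinom j) * centralBinom (m-j) := by rw [h2]
        _ = 2 * ((2*j+1) * (centralBinom j * centralBinom (m-j))) := by ring
    have hB : ∑ k ∈ range (m+2), (m+1-k) * (centralBinom k * centralBinom (m + 1 - k)) = 2 * T := by
      rw [← Finset.sum_range_reflect
        (fun k => (m+1-k) * (centralBinom k * centralBinom (m + 1 - k))) (m+2)]
      rw [← hA]
      apply Finset.sum_congr rfl
      intro j hj
      simp only [Finset.mem_range] at hj
      have h1 : m + 2 - 1 - j = m + 1 - j := by omega
      have h2 : m + 1 - (m + 1 - j) = j := by omega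
      rw [h1, h2, mul_comm (centralBinom (m+1-j)) (centralBinom j)]
    have key : (m+1) * ∑ k ∈ range (m+2), centralBinom k * centralBinom (m + 1 - k)
        = (m+1) * (4 * S) := by
      rw [Finset.mul_sum]
      have : ∀ k ∈ range (m+2), (m+1) * (centralBinom k * centralBinom (m + 1 - k))
          = k * (centralBinom k * centralBinom (m + 1 - k))
            + (m+1-k) * (centralBinom k * centralBinom (m + 1 - k)) := by
        intro k hk
        simp only [Finset.mem_range] at hk
        rw [← Nat.add_mul]
        congr 1
        omega
      rw [Finset.sum_congr rfl this, Finset.sum_add_distrib, hA, hB]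
      calc 2*T + 2*T = 2*(2*T) := by ring
        _ = 2*((2*m+2)*S) := by rw [hTT]
        _ = (m+1)*(4*S) := by ring
    have h4 : ∑ k ∈ range (m+2), centralBinom k * centralBinom (m + 1 - k) = 4 * S :=
      Nat.eq_of_mul_eq_mul_left (by omega) key
    rw [h4, ih]
    ring


/-- A grand Dyck path of semilength `n`. -/
def IsGrandDyck (n : ℕ) (w : List Bool) : Prop :=
  w.length = 2 * n ∧ w.count true = n

/-- The degree of symmetry of a grand Dyck path of semilength `n`: the number of
`i ∈ {1,…,n}` such that `h_{i−1} = h_{2n+1−i}` and `h_i = h_{2n−i}`. -/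
def dsGD (n : ℕ) (w : List Bool) : ℕ :=
  ((Finset.Icc 1 n).filter fun i =>
    ht w (i - 1) = ht w (2 * n + 1 - i) ∧ ht w i = ht w (2 * n - i)).card

/-- The number of symmetric vertices of a grand Dyck path of semilength `n`:
`sv(P) = #{i ∈ {0,…,n−1} : h_i = h_{2n−i}}`. -/
def svGD (n : ℕ) (w : List Bool) : ℕ :=
  ((Finset.range n).filter fun i => ht w i = ht w (2 * n - i)).card

lemma cb_le (n : ℕ) : Nat.centralBinom n ≤ 4 ^ n := by
  have h := cb_conv n
  rw [Finset.sum_range_succ] at h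
  simp only [Nat.sub_self, Nat.centralBinom_zero, mul_one] at h
  omega

lemma hsv_nat (n : ℕ) :
    ∑ w ∈ F (2*n) n, svGD n w = 4 ^ n - Nat.centralBinom n := by
  have hswap : ∑ w ∈ F (2*n) n, svGD n w
      = ∑ i ∈ Finset.range n, ((F (2*n) n).filter (fun w => ht w i = ht w (2*n-i))).card := by
    simp only [svGD, Finset.card_filter]
    exact Finset.sum_comm
  have hfil : ∀ i ∈ Finset.range n,
      ((F (2*n) n).filter (fun w => ht w i = ht w (2*n-i))).card
        = Nat.centralBinom i * Nat.centralBinom (n-i) := by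
    intro i hi
    rw [Finset.mem_range] at hi
    have heq : (F (2*n) n).filter (fun w => ht w i = ht w (2*n-i))
        = (F (2*n) n).filter (fun w => (seg w i (2*n-i)).count true = n - i) := by
      apply Finset.filter_congr
      intro w hw
      simp only [F, Finset.mem_filter, mem_BW] at hw
      rw [ht_eq_iff n i w hw.1 (by omega)]
    rw [heq, card_seg1 n i (by omega), Nat.centralBinom_eq_two_mul_choose,
      Nat.centralBinom_eq_two_mul_choose]
  rw [hswap, Finset.sum_congr rfl hfil]
  have h := cb_conv n
  rw [Finset.sum_range_succ] at h
  simp only [Nat.sub_self, Nat.centralBinom_zero, mul_one] at h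
  omega

lemma hds_nat (n : ℕ) (hn : 1 ≤ n) :
    ∑ w ∈ F (2*n) n, dsGD n w = 2 ^ (2*n - 1) := by
  have hswap : ∑ w ∈ F (2*n) n, dsGD n w
      = ∑ i ∈ Finset.Icc 1 n, ((F (2*n) n).filter
          (fun w => ht w (i-1) = ht w (2*n+1-i) ∧ ht w i = ht w (2*n-i))).card := by
    simp only [dsGD, Finset.card_filter]
    exact Finset.sum_comm
  have hfil : ∀ i ∈ Finset.Icc 1 n,
      ((F (2*n) n).filter
          (fun w => ht w (i-1) = ht w (2*n+1-i) ∧ ht w i = ht w (2*n-i))).card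
        = 2 * (Nat.centralBinom (i-1) * Nat.centralBinom (n-i)) := by
    intro i hi
    rw [Finset.mem_Icc] at hi
    obtain ⟨j, rfl⟩ : ∃ j, i = j + 1 := ⟨i-1, by omega⟩
    have heq : (F (2*n) n).filter
          (fun w => ht w (j+1-1) = ht w (2*n+1-(j+1)) ∧ ht w (j+1) = ht w (2*n-(j+1)))
        = (F (2*n) n).filter (fun w => (seg w j (2*n-j)).count true = n - j ∧
            (seg w (j+1) (2*n-(j+1))).count true = n - (j+1)) := by
      apply Finset.filter_congr
      intro w hw
      simp only [F, Finset.mem_filter, mem_BW] at hw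
      have e1 : j + 1 - 1 = j := by omega
      have e2 : 2*n+1-(j+1) = 2*n - j := by omega
      rw [e1, e2, ht_eq_iff n j w hw.1 (by omega), ht_eq_iff n (j+1) w hw.1 (by omega)]
    rw [heq, card_seg2 n j (by omega), Nat.centralBinom_eq_two_mul_choose,
      Nat.centralBinom_eq_two_mul_choose]
    congr 3 <;> omega
  rw [hswap, Finset.sum_congr rfl hfil]
  rw [← Finset.Ico_add_one_right_eq_Icc, Finset.sum_Ico_eq_sum_range]
  have hnn : n + 1 - 1 = n := by omega
  rw [hnn]
  have hterm : ∀ j ∈ Finset.range n,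
      2 * (Nat.centralBinom (1+j-1) * Nat.centralBinom (n-(1+j)))
        = 2 * (Nat.centralBinom j * Nat.centralBinom ((n-1) - j)) := by
    intro j hj
    congr 3 <;> omega
  rw [Finset.sum_congr rfl hterm, ← Finset.mul_sum]
  have hr : Finset.range n = Finset.range ((n-1)+1) := by
    congr 1; omega
  rw [hr, cb_conv (n-1)]
  have : 2 * n - 1 = 2*(n-1) + 1 := by omega
  rw [this, pow_succ, show (4:ℕ) = 2^2 from rfl, ← pow_mul]
  ring

/-- For `n ≥ 1`, the sum of `ds(P)` over all grand Dyck paths of semilength `n` equals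
`2^{2n−1}`, and the sum of `sv(P)` over all grand Dyck paths of semilength `n` equals
`4^n − binom(2n,n)`. -/
theorem grandDyck_ds_sv_totals (n : ℕ) (hn : 1 ≤ n) :
    (∑ᶠ w ∈ {w : List Bool | IsGrandDyck n w}, dsGD n w) = 2 ^ (2 * n - 1) ∧
    (∑ᶠ w ∈ {w : List Bool | IsGrandDyck n w}, (svGD n w : ℤ))
      = 4 ^ n - (2 * n).choose n := by
  have hset : {w : List Bool | IsGrandDyck n w} = ↑(F (2*n) n) := by
    ext w
    simp [IsGrandDyck, F, mem_BW, Finset.mem_filter]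
  constructor
  · rw [hset, finsum_mem_coe_finset]
    exact hds_nat n hn
  · rw [hset, finsum_mem_coe_finset]
    have : ∑ w ∈ F (2*n) n, ((svGD n w : ℤ)) = ((∑ w ∈ F (2*n) n, svGD n w : ℕ) : ℤ) := by
      push_cast
      rfl
    rw [this, hsv_nat n, Nat.cast_sub (cb_le n)]
    rw [Nat.centralBinom_eq_two_mul_choose]
    push_cast
    ring
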